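/- If the lattice of normal subgroups of ZM(m,n,r) is a chain and m > 1, then gcd(m, r^k − 1) = 1 for all 1 ≤ k < n. -/

import Mathlib

def ZMrels (m n : ℕ) (r : ℤ) : Set (FreeGroup Bool) :=
  {FreeGroup.of true ^ m, FreeGroup.of false ^ n,
   (FreeGroup.of false)⁻¹ * FreeGroup.of true * FreeGroup.of false * (FreeGroup.of true) ^ (-r)}

abbrev ZM (m n : ℕ) (r : ℤ) : Type := PresentedGroup (ZMrels m n r)

def ZMa (m n : ℕ) (r : ℤ) : ZM m n r := PresentedGroup.of true

def ZMb (m n : ℕ) (r : ℤ) : ZM m n r := PresentedGroup.of false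

/-- Left addition as a monoid hom into permutations. -/
def addLeftHom (β : Type*) [AddGroup β] : Multiplicative β →* Equiv.Perm β where
  toFun x := Equiv.addLeft x.toAdd
  map_one' := by ext z; simp
  map_mul' x y := by ext z; simp [Equiv.Perm.mul_apply, add_assoc]

theorem stmt14 (m n : ℕ) (r : ℤ) (hm : 0 < m) (hn : 0 < n)
    (hco : Nat.Coprime m n) (hco2 : IsCoprime (m : ℤ) (r - 1))
    (hr : (m : ℤ) ∣ r ^ n - 1)
    (hchain : ∀ H K : Subgroup (ZM m n r), H.Normal → K.Normal → H ≤ K ∨ K ≤ H) (hm1 : 1 < m) :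
    ∀ k : ℕ, 1 ≤ k → k < n → Int.gcd (m : ℤ) (r ^ k - 1) = 1 := by
  intro k hk1 hkn
  by_contra hne
  set g : ℕ := Int.gcd (m : ℤ) (r ^ k - 1) with hg
  set p : ℕ := g.minFac with hp
  have hpprime : p.Prime := Nat.minFac_prime hne
  haveI := Fact.mk hpprime
  have hpg : (p : ℤ) ∣ (g : ℤ) := Int.natCast_dvd_natCast.mpr (Nat.minFac_dvd g)
  have hpm : (p : ℤ) ∣ (m : ℤ) := hpg.trans (Int.gcd_dvd_left _ _)
  have hpk : (p : ℤ) ∣ r ^ k - 1 := hpg.trans (Int.gcd_dvd_right _ _)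
  have hpm' : p ∣ m := Int.natCast_dvd_natCast.mp hpm
  set rb : ZMod p := ((r : ℤ) : ZMod p) with hrb
  have hrk : rb ^ k = 1 := by
    have h0 : ((r ^ k - 1 : ℤ) : ZMod p) = 0 :=
      (ZMod.intCast_zmod_eq_zero_iff_dvd _ p).mpr hpk
    push_cast at h0
    rw [sub_eq_zero] at h0
    exact h0
  have hrn : rb ^ n = 1 := by
    have h0 : ((r ^ n - 1 : ℤ) : ZMod p) = 0 :=
      (ZMod.intCast_zmod_eq_zero_iff_dvd _ p).mpr (hpm.trans hr)
    push_cast at h0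
    rw [sub_eq_zero] at h0
    exact h0
  set t : ℕ := Nat.gcd k n with htdef
  have hrt : rb ^ t = 1 := pow_gcd_eq_one.mpr ⟨hrk, hrn⟩
  have ht1 : 1 ≤ t := Nat.gcd_pos_of_pos_left n (by omega)
  have htn : t < n := lt_of_le_of_lt (Nat.le_of_dvd (by omega) (Nat.gcd_dvd_left k n)) hkn
  -- the unit r mod p
  have hrmul : rb * rb ^ (k - 1) = 1 := by
    rw [← pow_succ']
    rw [Nat.sub_add_cancel hk1]
    exact hrk
  set u : (ZMod p)ˣ := ⟨rb, rb ^ (k - 1), hrmul, by rw [mul_comm]; exact hrmul⟩ with hu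
  have huval : (u : ZMod p) = rb := rfl
  set U := MulAction.toPermHom (ZMod p)ˣ (ZMod p) with hU
  set Aperm : Equiv.Perm (ZMod p) := addLeftHom (ZMod p) (Multiplicative.ofAdd 1) with hA
  set fχ : Bool → Equiv.Perm (ZMod p) := fun b => cond b Aperm (U u⁻¹) with hfχ
  have hχrel : ∀ w ∈ ZMrels m n r, FreeGroup.lift fχ w = 1 := by
    intro w hw
    simp only [ZMrels, Set.mem_insert_iff, Set.mem_singleton_iff] at hw
    rcases hw with h | h | h <;> subst h
    · rw [map_pow, FreeGroup.lift_apply_of]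
      show Aperm ^ m = 1
      rw [hA, ← map_pow, ← ofAdd_nsmul]
      have hms : (m • (1 : ZMod p)) = 0 := by
        rw [nsmul_eq_mul, mul_one]
        exact (ZMod.natCast_eq_zero_iff m p).mpr hpm'
      rw [hms]
      simp
    · rw [map_pow, FreeGroup.lift_apply_of]
      show (U u⁻¹) ^ n = 1
      rw [← map_pow, inv_pow]
      have hun : u ^ n = 1 := Units.ext (by simpa [huval] using hrn)
      rw [hun]
      simp
    · simp only [map_mul, map_inv, map_zpow, FreeGroup.lift_apply_of]
      show (U u⁻¹)⁻¹ * Aperm * (U u⁻¹) * Aperm ^ (-r) = 1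
      rw [← map_inv, inv_inv, hA, ← map_zpow, ← ofAdd_zsmul]
      ext x
      simp only [Equiv.Perm.mul_apply, Equiv.Perm.one_apply, addLeftHom,
        MonoidHom.coe_mk, OneHom.coe_mk, Equiv.coe_addLeft, toAdd_ofAdd, hU,
        MulAction.toPermHom_apply, MulAction.toPerm_apply, Units.smul_def,
        smul_eq_mul, zsmul_eq_mul, mul_one]
      rw [mul_add, mul_one, Units.mul_inv_cancel_left, huval]
      push_cast
      ring
  set χ : ZM m n r →* Equiv.Perm (ZMod p) := PresentedGroup.toGroup hχrel with hχ
  -- the homomorphism to Z/n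
  set fπ : Bool → Multiplicative (ZMod n) :=
    fun b => cond b 1 (Multiplicative.ofAdd 1) with hfπ
  have hπrel : ∀ w ∈ ZMrels m n r, FreeGroup.lift fπ w = 1 := by
    intro w hw
    simp only [ZMrels, Set.mem_insert_iff, Set.mem_singleton_iff] at hw
    rcases hw with h | h | h <;> subst h
    · rw [map_pow, FreeGroup.lift_apply_of]
      show (1 : Multiplicative (ZMod n)) ^ m = 1
      simp
    · rw [map_pow, FreeGroup.lift_apply_of]
      show (Multiplicative.ofAdd (1 : ZMod n)) ^ n = 1
      rw [← ofAdd_nsmul, nsmul_eq_mul, mul_one, ZMod.natCast_self]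
      rfl
    · simp only [map_mul, map_inv, map_zpow, FreeGroup.lift_apply_of]
      show (Multiplicative.ofAdd (1 : ZMod n))⁻¹ * 1 * Multiplicative.ofAdd (1 : ZMod n) *
        (1 : Multiplicative (ZMod n)) ^ (-r) = 1
      group
  set π₁ : ZM m n r →* Multiplicative (ZMod n) := PresentedGroup.toGroup hπrel with hπ
  rcases hchain π₁.ker χ.ker inferInstance inferInstance with hHK | hKH
  · -- a ∈ ker π₁ but a ∉ ker χ
    have ha : ZMa m n r ∈ π₁.ker := by
      rw [MonoidHom.mem_ker]
      show π₁ (PresentedGroup.of true) = 1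
      rw [hπ, PresentedGroup.toGroup.of]
      rfl
    have haK := hHK ha
    rw [MonoidHom.mem_ker] at haK
    have hχa : χ (ZMa m n r) = Aperm := by
      rw [hχ]
      exact PresentedGroup.toGroup.of hχrel
    rw [hχa] at haK
    have h0 : Aperm 0 = (1 : Equiv.Perm (ZMod p)) 0 := by rw [haK]
    simp only [hA, addLeftHom, MonoidHom.coe_mk, OneHom.coe_mk, Equiv.coe_addLeft,
      toAdd_ofAdd, add_zero, Equiv.Perm.one_apply] at h0
    exact one_ne_zero h0
  · -- b^t ∈ ker χ but b^t ∉ ker π₁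
    have hb : (ZMb m n r) ^ t ∈ χ.ker := by
      rw [MonoidHom.mem_ker, map_pow]
      have hχb : χ (ZMb m n r) = U u⁻¹ := by
        rw [hχ]
        exact PresentedGroup.toGroup.of hχrel
      rw [hχb, ← map_pow, inv_pow]
      have hut : u ^ t = 1 := Units.ext (by simpa [huval] using hrt)
      rw [hut]
      simp
    have hbH := hKH hb
    rw [MonoidHom.mem_ker, map_pow] at hbH
    have hπb : π₁ (ZMb m n r) = Multiplicative.ofAdd (1 : ZMod n) := by
      rw [hπ]
      exact PresentedGroup.toGroup.of hπrel
    rw [hπb, ← ofAdd_nsmul, nsmul_eq_mul, mul_one] at hbH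
    have : (t : ZMod n) = 0 := by
      have := congrArg Multiplicative.toAdd hbH
      simpa using this
    rw [ZMod.natCast_eq_zero_iff] at this
    have := Nat.le_of_dvd (by omega) this
    omega
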